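/- If n ≡ 1 (mod 3), then the path P_n on vertices x_0,…,x_{n−1} has exactly (n+2)/3 minimum-weight Roman dominating functions; each assigns label 1 to exactly one vertex x_r with r ≡ 0 (mod 3), assigns 2 to the vertices at positions ≡ 1 (mod 3) within each of the two resulting segments [0, r−1] and [r+1, n−1], and 0 elsewhere. -/

import Mathlib

open Finset
open scoped Classical

def IsRDF {V : Type*} (G : SimpleGraph V) (f : V → ℕ) : Prop :=
  (∀ v, f v ≤ 2) ∧ ∀ v, f v = 0 → ∃ u, G.Adj v u ∧ f u = 2

noncomputable def gammaR {V : Type*} [Fintype V] (G : SimpleGraph V) : ℕ :=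
  sInf {w | ∃ f, IsRDF G f ∧ ∑ v, f v = w}

def IsMinRDF {V : Type*} [Fintype V] (G : SimpleGraph V) (f : V → ℕ) : Prop :=
  IsRDF G f ∧ ∑ v, f v = gammaR G

noncomputable instance myInstSetFintype {V : Type*} [Fintype V] (s : Set V) : Fintype s :=
  s.toFinite.fintype

/-- The candidate `γ_R`-function on the path `x_0, …, x_{n-1}` determined by the
position `r` of the unique vertex with label `1`: label `2` is given at positions
`≡ 1 (mod 3)` within each of the segments `[0, r-1]` and `[r+1, n-1]`, and `0` elsewhere. -/
def pathOneFun (n r : ℕ) : Fin n → ℕ := fun i =>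
  if (i : ℕ) = r then 1
  else if (i : ℕ) < r then (if (i : ℕ) % 3 = 1 then 2 else 0)
  else (if ((i : ℕ) - (r + 1)) % 3 = 1 then 2 else 0)

/-! ### Auxiliary lemmas -/

/-- ℕ-level version of `pathOneFun`. -/
def g0 (r : ℕ) : ℕ → ℕ := fun i =>
  if i = r then 1
  else if i < r then (if i % 3 = 1 then 2 else 0)
  else (if (i - (r + 1)) % 3 = 1 then 2 else 0)

lemma Sl (k : ℕ) : ∑ j ∈ Finset.range (3*k), (if j % 3 = 1 then (2:ℕ) else 0) = 2*k := by
  induction k with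
  | zero => simp
  | succ k ih =>
    have h : 3 * (k+1) = (3*k) + 1 + 1 + 1 := by ring
    rw [h, Finset.sum_range_succ, Finset.sum_range_succ, Finset.sum_range_succ, ih]
    rw [if_neg (by omega), if_pos (by omega : (3*k+1) % 3 = 1), if_neg (by omega)]
    ring

lemma pathOneFun_sum (n r : ℕ) (hr : r < n) (hr3 : r % 3 = 0) (hn : n % 3 = 1) :
    ∑ v, pathOneFun n r v = 2 * (n / 3) + 1 := by
  have h1 : ∑ v, pathOneFun n r v = ∑ i ∈ Finset.range n, g0 r i := by
    rw [← Fin.sum_univ_eq_sum_range]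
    rfl
  rw [h1, Finset.range_eq_Ico,
    ← Finset.sum_Ico_consecutive _ (Nat.zero_le r) (le_of_lt hr),
    ← Finset.sum_Ico_consecutive _ (Nat.le_succ r) hr]
  have h2 : ∑ i ∈ Finset.Ico 0 r, g0 r i
      = ∑ i ∈ Finset.range (3 * (r/3)), (if i % 3 = 1 then (2:ℕ) else 0) := by
    rw [← Finset.range_eq_Ico]
    have : 3 * (r/3) = r := by omega
    rw [this]
    apply Finset.sum_congr rfl
    intro i hi
    simp only [Finset.mem_range] at hi
    unfold g0
    rw [if_neg (by omega), if_pos hi]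
  have h3 : ∑ i ∈ Finset.Ico r (r+1), g0 r i = 1 := by
    rw [Finset.sum_Ico_eq_sum_range]
    simp [g0]
  have h4 : ∑ i ∈ Finset.Ico (r+1) n, g0 r i
      = ∑ j ∈ Finset.range (3 * ((n - (r+1))/3)), (if j % 3 = 1 then (2:ℕ) else 0) := by
    rw [Finset.sum_Ico_eq_sum_range]
    have : 3 * ((n - (r+1))/3) = n - (r+1) := by omega
    rw [this]
    apply Finset.sum_congr rfl
    intro j hj
    unfold g0
    rw [if_neg (by omega), if_neg (by omega)]
    congr 2
    omega
  rw [h2, h3, h4, Sl, Sl]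
  omega

lemma pathOneFun_isRDF (n r : ℕ) (hr : r < n) (hr3 : r % 3 = 0) (hn : n % 3 = 1) :
    IsRDF (SimpleGraph.pathGraph n) (pathOneFun n r) := by
  constructor
  · intro v; unfold pathOneFun; split_ifs <;> omega
  · intro v hv
    unfold pathOneFun at hv
    have hvn : (v:ℕ) < n := v.isLt
    by_cases h1 : (v:ℕ) = r
    · rw [if_pos h1] at hv; omega
    rw [if_neg h1] at hv
    by_cases h2 : (v:ℕ) < r
    · rw [if_pos h2] at hv
      have hm : (v:ℕ) % 3 = 0 ∨ (v:ℕ) % 3 = 2 := by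
        by_contra h; push_neg at h; rw [if_pos (by omega)] at hv; omega
      rcases hm with hm | hm
      · refine ⟨⟨(v:ℕ)+1, by omega⟩, ?_, ?_⟩
        · rw [SimpleGraph.pathGraph_adj]; left; rfl
        · unfold pathOneFun
          rw [if_neg (by simp; omega), if_pos (by simp; omega), if_pos (by simp; omega)]
      · refine ⟨⟨(v:ℕ)-1, by omega⟩, ?_, ?_⟩
        · rw [SimpleGraph.pathGraph_adj]; right; simp; omega
        · unfold pathOneFun
          rw [if_neg (by simp; omega), if_pos (by simp; omega), if_pos (by simp; omega)]
    · rw [if_neg h2] at hv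
      set j := (v:ℕ) - (r+1) with hj
      have hm : j % 3 = 0 ∨ j % 3 = 2 := by
        by_contra h; push_neg at h; rw [if_pos (by omega)] at hv; omega
      have hvr : r < (v:ℕ) := by omega
      rcases hm with hm | hm
      · have hlt : (v:ℕ)+1 < n := by omega
        refine ⟨⟨(v:ℕ)+1, hlt⟩, ?_, ?_⟩
        · rw [SimpleGraph.pathGraph_adj]; left; rfl
        · unfold pathOneFun
          rw [if_neg (by simp; omega), if_neg (by simp; omega), if_pos (by simp; omega)]
      · refine ⟨⟨(v:ℕ)-1, by omega⟩, ?_, ?_⟩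
        · rw [SimpleGraph.pathGraph_adj]; right; simp; omega
        · unfold pathOneFun
          rw [if_neg (by simp; omega), if_neg (by simp; omega), if_pos (by simp; omega)]

lemma nbr_card {n : ℕ} (u : Fin n) :
    (Finset.univ.filter fun z : Fin n => (SimpleGraph.pathGraph n).Adj z u).card ≤ 2 := by
  have h := Finset.card_le_card_of_injOn (f := fun z : Fin n => decide ((z:ℕ) < (u:ℕ)))
    (s := Finset.univ.filter fun z : Fin n => (SimpleGraph.pathGraph n).Adj z u)
    (t := (Finset.univ : Finset Bool)) (fun _ _ => Finset.mem_univ _) ?_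
  · simpa using h
  · intro z1 h1 z2 h2 he
    simp only [Finset.mem_coe, Finset.mem_filter, SimpleGraph.pathGraph_adj] at h1 h2
    simp only [decide_eq_decide] at he
    have e1 := h1.2; have e2 := h2.2
    have : (z1:ℕ) = (z2:ℕ) := by
      by_cases hb : (z1:ℕ) < (u:ℕ)
      · have : (z2:ℕ) < (u:ℕ) := he.mp hb
        omega
      · have : ¬ (z2:ℕ) < (u:ℕ) := fun h => hb (he.mpr h)
        omega
    exact Fin.ext this

lemma counts {n : ℕ} {f : Fin n → ℕ} (hf2 : ∀ v, f v ≤ 2) :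
    ∑ v, f v = 2 * (Finset.univ.filter fun v => f v = 2).card
        + (Finset.univ.filter fun v => f v = 1).card
    ∧ n = (Finset.univ.filter fun v => f v = 2).card
        + (Finset.univ.filter fun v => f v = 1).card
        + (Finset.univ.filter fun v => f v = 0).card := by
  have hA : (Finset.univ.filter fun v => f v = 2).card
      = ∑ v : Fin n, (if f v = 2 then 1 else 0) := by
    rw [Finset.card_filter]
  have hB : (Finset.univ.filter fun v => f v = 1).card
      = ∑ v : Fin n, (if f v = 1 then 1 else 0) := by
    rw [Finset.card_filter]
  have hZ : (Finset.univ.filter fun v => f v = 0).card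
      = ∑ v : Fin n, (if f v = 0 then 1 else 0) := by
    rw [Finset.card_filter]
  constructor
  · rw [hA, hB, Finset.mul_sum, ← Finset.sum_add_distrib]
    apply Finset.sum_congr rfl
    intro v _
    have := hf2 v
    split_ifs <;> omega
  · rw [hA, hB, hZ, ← Finset.sum_add_distrib, ← Finset.sum_add_distrib]
    calc (n : ℕ) = ∑ _v : Fin n, 1 := by simp
      _ = ∑ x : Fin n, (((if f x = 2 then 1 else 0) + if f x = 1 then 1 else 0)
            + if f x = 0 then 1 else 0) := by
          apply Finset.sum_congr rfl
          intro v _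
          have := hf2 v
          split_ifs <;> omega

lemma zero_card_eq_fibers {n : ℕ} {f : Fin n → ℕ} (g : Fin n → Fin n)
    (hg : ∀ v, f v = 0 → (SimpleGraph.pathGraph n).Adj v (g v) ∧ f (g v) = 2) :
    (Finset.univ.filter fun v => f v = 0).card
      = ∑ u ∈ (Finset.univ.filter fun v => f v = 2),
          ((Finset.univ.filter fun v => f v = 0).filter fun z => g z = u).card := by
  rw [← Finset.card_eq_sum_card_fiberwise]
  intro v hv
  simp only [Finset.mem_coe, Finset.mem_filter, Finset.mem_univ, true_and] at hv ⊢
  exact (hg v hv).2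

lemma fiber_sub_nbr {n : ℕ} {f : Fin n → ℕ} (g : Fin n → Fin n)
    (hg : ∀ v, f v = 0 → (SimpleGraph.pathGraph n).Adj v (g v) ∧ f (g v) = 2) (u : Fin n) :
    ((Finset.univ.filter fun v => f v = 0).filter fun z => g z = u)
      ⊆ (Finset.univ.filter fun z : Fin n => (SimpleGraph.pathGraph n).Adj z u) := by
  intro z hz
  simp only [Finset.mem_filter, Finset.mem_univ, true_and] at hz ⊢
  rcases hz with ⟨hz0, hzu⟩
  have := (hg z hz0).1
  rwa [hzu] at this

lemma fiber_le_two {n : ℕ} {f : Fin n → ℕ} (g : Fin n → Fin n)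
    (hg : ∀ v, f v = 0 → (SimpleGraph.pathGraph n).Adj v (g v) ∧ f (g v) = 2) (u : Fin n) :
    ((Finset.univ.filter fun v => f v = 0).filter fun z => g z = u).card ≤ 2 :=
  le_trans (Finset.card_le_card (fiber_sub_nbr g hg u)) (nbr_card u)

lemma rdf_lower {n : ℕ} {f : Fin n → ℕ} (hf : IsRDF (SimpleGraph.pathGraph n) f) :
    2 * n ≤ 3 * ∑ v, f v := by
  set g : Fin n → Fin n := fun v => if h : f v = 0 then (hf.2 v h).choose else v with hgdef
  have hg : ∀ v, f v = 0 → (SimpleGraph.pathGraph n).Adj v (g v) ∧ f (g v) = 2 := by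
    intro v hv
    simp only [hgdef, dif_pos hv]
    exact (hf.2 v hv).choose_spec
  obtain ⟨hsum, hcard⟩ := counts hf.1
  have hZ2A : (Finset.univ.filter fun v => f v = 0).card
      ≤ 2 * (Finset.univ.filter fun v => f v = 2).card := by
    rw [zero_card_eq_fibers g hg]
    calc ∑ u ∈ (Finset.univ.filter fun v => f v = 2),
          ((Finset.univ.filter fun v => f v = 0).filter fun z => g z = u).card
        ≤ ∑ _u ∈ (Finset.univ.filter fun v => f v = 2), 2 :=
          Finset.sum_le_sum (fun u _ => fiber_le_two g hg u)
      _ = 2 * (Finset.univ.filter fun v => f v = 2).card := by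
          rw [Finset.sum_const]; ring
  omega

lemma equality_props {n : ℕ} {f : Fin n → ℕ}
    (hf : IsRDF (SimpleGraph.pathGraph n) f) (hw : 3 * ∑ v, f v = 2 * n + 1) :
    (∃! rf : Fin n, f rf = 1) ∧
    (∀ z u₁ u₂ : Fin n, (SimpleGraph.pathGraph n).Adj z u₁ →
      (SimpleGraph.pathGraph n).Adj z u₂ → f u₁ = 2 → f u₂ = 2 → u₁ = u₂) ∧
    (∀ u : Fin n, f u = 2 → 1 ≤ (u:ℕ) ∧ (u:ℕ) + 1 < n ∧
      (∀ z : Fin n, (SimpleGraph.pathGraph n).Adj z u → f z = 0)) := by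
  set g : Fin n → Fin n := fun v => if h : f v = 0 then (hf.2 v h).choose else v with hgdef
  have hg : ∀ v, f v = 0 → (SimpleGraph.pathGraph n).Adj v (g v) ∧ f (g v) = 2 := by
    intro v hv
    simp only [hgdef, dif_pos hv]
    exact (hf.2 v hv).choose_spec
  obtain ⟨hsum, hcard⟩ := counts hf.1
  have hfib := zero_card_eq_fibers g hg
  have hZle : (Finset.univ.filter fun v => f v = 0).card
      ≤ 2 * (Finset.univ.filter fun v => f v = 2).card := by
    rw [hfib]
    calc ∑ u ∈ (Finset.univ.filter fun v => f v = 2),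
          ((Finset.univ.filter fun v => f v = 0).filter fun z => g z = u).card
        ≤ ∑ _u ∈ (Finset.univ.filter fun v => f v = 2), 2 :=
          Finset.sum_le_sum (fun u _ => fiber_le_two g hg u)
      _ = _ := by rw [Finset.sum_const]; ring
  have hB1 : (Finset.univ.filter fun v => f v = 1).card = 1 := by omega
  have hZA : (Finset.univ.filter fun v => f v = 0).card
      = 2 * (Finset.univ.filter fun v => f v = 2).card := by omega
  have hfib2 : ∀ u ∈ (Finset.univ.filter fun v => f v = 2),
      ((Finset.univ.filter fun v => f v = 0).filter fun z => g z = u).card = 2 := by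
    by_contra hcon
    push_neg at hcon
    obtain ⟨u0, hu0, hne⟩ := hcon
    have hlt : ((Finset.univ.filter fun v => f v = 0).filter fun z => g z = u0).card < 2 :=
      lt_of_le_of_ne (fiber_le_two g hg u0) hne
    have hstep : (∑ u ∈ (Finset.univ.filter fun v => f v = 2),
          ((Finset.univ.filter fun v => f v = 0).filter fun z => g z = u).card)
        < ∑ _u ∈ (Finset.univ.filter fun v => f v = 2), 2 :=
      Finset.sum_lt_sum (fun u _ => fiber_le_two g hg u) ⟨u0, hu0, hlt⟩
    rw [Finset.sum_const, smul_eq_mul] at hstep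
    omega
  have hNfib : ∀ u : Fin n, f u = 2 →
      ((Finset.univ.filter fun v => f v = 0).filter fun z => g z = u)
        = (Finset.univ.filter fun z : Fin n => (SimpleGraph.pathGraph n).Adj z u) := by
    intro u hu
    apply Finset.eq_of_subset_of_card_le (fiber_sub_nbr g hg u)
    rw [hfib2 u (by simp [hu])]
    exact nbr_card u
  have hKnbr : ∀ z u : Fin n, (SimpleGraph.pathGraph n).Adj z u → f u = 2 →
      f z = 0 ∧ g z = u := by
    intro z u hadj hu
    have hz : z ∈ (Finset.univ.filter fun z : Fin n => (SimpleGraph.pathGraph n).Adj z u) := by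
      simp [hadj]
    rw [← hNfib u hu] at hz
    simp only [Finset.mem_filter, Finset.mem_univ, true_and] at hz
    exact hz
  refine ⟨?_, ?_, ?_⟩
  · obtain ⟨rf, hrf⟩ := Finset.card_eq_one.mp hB1
    refine ⟨rf, ?_, ?_⟩
    · have : rf ∈ (Finset.univ.filter fun v => f v = 1) := by rw [hrf]; simp
      simpa using this
    · intro y hy
      have : y ∈ (Finset.univ.filter fun v => f v = 1) := by simp [hy]
      rw [hrf] at this
      simpa using this
  · intro z u₁ u₂ h1 h2 hu1 hu2
    have k1 := (hKnbr z u₁ h1 hu1).2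
    have k2 := (hKnbr z u₂ h2 hu2).2
    rw [← k1, ← k2]
  · intro u hu
    have hcard2 : (Finset.univ.filter fun z : Fin n => (SimpleGraph.pathGraph n).Adj z u).card
        = 2 := by
      rw [← hNfib u hu]
      exact hfib2 u (by simp [hu])
    constructor
    · by_contra h0
      have hu0 : (u:ℕ) = 0 := by omega
      have : (Finset.univ.filter fun z : Fin n => (SimpleGraph.pathGraph n).Adj z u).card
          ≤ 1 := by
        apply Finset.card_le_one.mpr
        intro a ha b hb
        simp only [Finset.mem_filter, Finset.mem_univ, true_and,
          SimpleGraph.pathGraph_adj] at ha hb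
        apply Fin.ext
        omega
      omega
    constructor
    · by_contra h0
      have hun : (u:ℕ) + 1 = n := by have := u.isLt; omega
      have : (Finset.univ.filter fun z : Fin n => (SimpleGraph.pathGraph n).Adj z u).card
          ≤ 1 := by
        apply Finset.card_le_one.mpr
        intro a ha b hb
        simp only [Finset.mem_filter, Finset.mem_univ, true_and,
          SimpleGraph.pathGraph_adj] at ha hb
        have han := a.isLt
        have hbn := b.isLt
        apply Fin.ext
        omega
      omega
    · intro z hadj
      exact (hKnbr z u hadj hu).1

lemma struct_from_facts {n r : ℕ} (F : ℕ → ℕ) (hn : n % 3 = 1) (hr : r < n)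
    (P1 : ∀ i, i < n → F i ≤ 2)
    (P2 : ∀ i, i < n → F i = 0 → (0 < i ∧ F (i-1) = 2) ∨ (i+1 < n ∧ F (i+1) = 2))
    (P3 : ∀ i, i < n → F i = 0 → ¬(0 < i ∧ F (i-1) = 2 ∧ i+1 < n ∧ F (i+1) = 2))
    (P4 : ∀ i, i < n → F i = 2 → 1 ≤ i ∧ i+1 < n ∧ F (i-1) = 0 ∧ F (i+1) = 0)
    (P5a : F r = 1) (P5b : ∀ i, i < n → F i = 1 → i = r) :
    r % 3 = 0 ∧ ∀ i, i < n → F i = g0 r i := by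
  have hL : ∀ i, i < r → F i = if i % 3 = 1 then 2 else 0 := by
    intro i
    induction i using Nat.strong_induction_on with
    | _ i ih =>
    intro hir
    have hin : i < n := lt_trans hir hr
    have hne1 : F i ≠ 1 := fun h => by have := P5b i hin h; omega
    have hm : i % 3 = 0 ∨ i % 3 = 1 ∨ i % 3 = 2 := by omega
    rcases hm with hm | hm | hm
    · rw [if_neg (by omega)]
      by_contra hFi
      have hFi2 : F i = 2 := by have := P1 i hin; omega
      obtain ⟨hi1, -, -, -⟩ := P4 i hin hFi2
      have hi3 : 3 ≤ i := by omega
      have e2 : F (i-2) = 2 := by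
        have h := ih (i-2) (by omega) (by omega)
        rwa [if_pos (by omega)] at h
      have e1 : F (i-1) = 0 := by
        have h := ih (i-1) (by omega) (by omega)
        rwa [if_neg (by omega)] at h
      refine P3 (i-1) (by omega) e1 ⟨by omega, ?_, by omega, ?_⟩
      · have : i - 1 - 1 = i - 2 := by omega
        rw [this]; exact e2
      · have : i - 1 + 1 = i := by omega
        rw [this]; exact hFi2
    · rw [if_pos hm]
      have e1 : F (i-1) = 0 := by
        have h := ih (i-1) (by omega) (by omega)
        rwa [if_neg (by omega)] at h
      rcases P2 (i-1) (by omega) e1 with ⟨hpos, h2⟩ | ⟨-, h2⟩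
      · exfalso
        have e2 : F (i-1-1) = 0 := by
          have h := ih (i-1-1) (by omega) (by omega)
          rwa [if_neg (by omega)] at h
        omega
      · have : i - 1 + 1 = i := by omega
        rwa [this] at h2
    · rw [if_neg (by omega)]
      have e1 : F (i-1) = 2 := by
        have h := ih (i-1) (by omega) (by omega)
        rwa [if_pos (by omega)] at h
      obtain ⟨-, -, -, h4⟩ := P4 (i-1) (by omega) e1
      have : i - 1 + 1 = i := by omega
      rwa [this] at h4
  have hr3 : r % 3 = 0 := by
    have hm : r % 3 = 0 ∨ r % 3 = 1 ∨ r % 3 = 2 := by omega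
    rcases hm with hm | hm | hm
    · exact hm
    · exfalso
      have e1 : F (r-1) = 0 := by
        have h := hL (r-1) (by omega)
        rwa [if_neg (by omega)] at h
      rcases P2 (r-1) (by omega) e1 with ⟨hpos, h2⟩ | ⟨-, h2⟩
      · have e2 : F (r-1-1) = 0 := by
          have h := hL (r-1-1) (by omega)
          rwa [if_neg (by omega)] at h
        omega
      · have : r - 1 + 1 = r := by omega
        rw [this] at h2
        omega
    · exfalso
      have e1 : F (r-1) = 2 := by
        have h := hL (r-1) (by omega)
        rwa [if_pos (by omega)] at h
      obtain ⟨-, -, -, h4⟩ := P4 (r-1) (by omega) e1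
      have : r - 1 + 1 = r := by omega
      rw [this] at h4
      omega
  have hR : ∀ i, r < i → i < n → F i = if (i - (r+1)) % 3 = 1 then 2 else 0 := by
    intro i
    induction i using Nat.strong_induction_on with
    | _ i ih =>
    intro hri hin
    have hne1 : F i ≠ 1 := fun h => by have := P5b i hin h; omega
    have hm : (i - (r+1)) % 3 = 0 ∨ (i - (r+1)) % 3 = 1 ∨ (i - (r+1)) % 3 = 2 := by omega
    rcases hm with hm | hm | hm
    · rw [if_neg (by omega)]
      by_contra hFi
      have hFi2 : F i = 2 := by have := P1 i hin; omega
      obtain ⟨hi1, -, h41, -⟩ := P4 i hin hFi2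
      by_cases hj : i = r + 1
      · rw [hj] at h41
        have : r + 1 - 1 = r := by omega
        rw [this] at h41
        omega
      · have hj3 : r + 4 ≤ i := by omega
        have e2 : F (i-2) = 2 := by
          have h := ih (i-2) (by omega) (by omega) (by omega)
          rwa [if_pos (by omega)] at h
        have e1 : F (i-1) = 0 := by
          have h := ih (i-1) (by omega) (by omega) (by omega)
          rwa [if_neg (by omega)] at h
        refine P3 (i-1) (by omega) e1 ⟨by omega, ?_, by omega, ?_⟩
        · have : i - 1 - 1 = i - 2 := by omega
          rw [this]; exact e2
        · have : i - 1 + 1 = i := by omega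
          rw [this]; exact hFi2
    · rw [if_pos hm]
      have e1 : F (i-1) = 0 := by
        have h := ih (i-1) (by omega) (by omega) (by omega)
        rwa [if_neg (by omega)] at h
      rcases P2 (i-1) (by omega) e1 with ⟨hpos, h2⟩ | ⟨-, h2⟩
      · exfalso
        by_cases hj : i = r + 2
        · have : i - 1 - 1 = r := by omega
          rw [this] at h2
          omega
        · have hj4 : r + 5 ≤ i := by omega
          have e2 : F (i-1-1) = 0 := by
            have h := ih (i-1-1) (by omega) (by omega) (by omega)
            rwa [if_neg (by omega)] at h
          omega
      · have : i - 1 + 1 = i := by omega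
        rwa [this] at h2
    · rw [if_neg (by omega)]
      have e1 : F (i-1) = 2 := by
        have h := ih (i-1) (by omega) (by omega) (by omega)
        rwa [if_pos (by omega)] at h
      obtain ⟨-, -, -, h4⟩ := P4 (i-1) (by omega) e1
      have : i - 1 + 1 = i := by omega
      rwa [this] at h4
  refine ⟨hr3, fun i hin => ?_⟩
  unfold g0
  by_cases h1 : i = r
  · rw [if_pos h1, h1, P5a]
  · rw [if_neg h1]
    by_cases h2 : i < r
    · rw [if_pos h2]; exact hL i h2
    · rw [if_neg h2]; exact hR i (by omega) hin

lemma equality_struct {n : ℕ} {f : Fin n → ℕ} (hn : n % 3 = 1)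
    (hf : IsRDF (SimpleGraph.pathGraph n) f) (hw : 3 * ∑ v, f v = 2 * n + 1) :
    ∃ r, r < n ∧ r % 3 = 0 ∧ f = pathOneFun n r := by
  obtain ⟨⟨rf, hrf1, hrfu⟩, huniq, hdeg⟩ := equality_props hf hw
  set F : ℕ → ℕ := fun i => if h : i < n then f ⟨i, h⟩ else 37 with hFdef
  have hFval : ∀ i (h : i < n), F i = f ⟨i, h⟩ := by
    intro i h
    simp only [hFdef, dif_pos h]
  have P1 : ∀ i, i < n → F i ≤ 2 := by
    intro i h
    rw [hFval i h]
    exact hf.1 _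
  have P2 : ∀ i, i < n → F i = 0 → (0 < i ∧ F (i-1) = 2) ∨ (i+1 < n ∧ F (i+1) = 2) := by
    intro i hin hFi
    rw [hFval i hin] at hFi
    obtain ⟨u, hadj, hu⟩ := hf.2 ⟨i, hin⟩ hFi
    rw [SimpleGraph.pathGraph_adj] at hadj
    simp only [Fin.val_mk] at hadj
    rcases hadj with h | h
    · right
      have hun := u.isLt
      refine ⟨by omega, ?_⟩
      rw [hFval (i+1) (by omega)]
      have he : (⟨i+1, by omega⟩ : Fin n) = u := Fin.ext (by simp; omega)
      rw [he]; exact hu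
    · left
      have hun := u.isLt
      refine ⟨by omega, ?_⟩
      rw [hFval (i-1) (by omega)]
      have he : (⟨i-1, by omega⟩ : Fin n) = u := Fin.ext (by simp; omega)
      rw [he]; exact hu
  have P3 : ∀ i, i < n → F i = 0 → ¬(0 < i ∧ F (i-1) = 2 ∧ i+1 < n ∧ F (i+1) = 2) := by
    rintro i hin hFi ⟨hpos, hm, hlt, hp⟩
    rw [hFval (i-1) (by omega)] at hm
    rw [hFval (i+1) hlt] at hp
    have h1 : (SimpleGraph.pathGraph n).Adj ⟨i, hin⟩ ⟨i-1, by omega⟩ := by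
      rw [SimpleGraph.pathGraph_adj]; right; simp; omega
    have h2 : (SimpleGraph.pathGraph n).Adj ⟨i, hin⟩ ⟨i+1, hlt⟩ := by
      rw [SimpleGraph.pathGraph_adj]; left; simp
    have heq := huniq ⟨i, hin⟩ _ _ h1 h2 hm hp
    have hval := congrArg Fin.val heq
    simp only [Fin.val_mk] at hval
    omega
  have P4 : ∀ i, i < n → F i = 2 → 1 ≤ i ∧ i+1 < n ∧ F (i-1) = 0 ∧ F (i+1) = 0 := by
    intro i hin hFi
    rw [hFval i hin] at hFi
    obtain ⟨h1, h2, h3⟩ := hdeg ⟨i, hin⟩ hFi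
    simp only [Fin.val_mk] at h1 h2
    refine ⟨h1, h2, ?_, ?_⟩
    · rw [hFval (i-1) (by omega)]
      apply h3
      rw [SimpleGraph.pathGraph_adj]; left; simp; omega
    · rw [hFval (i+1) h2]
      apply h3
      rw [SimpleGraph.pathGraph_adj]; right; simp
  have P5a : F (rf : ℕ) = 1 := by
    rw [hFval (rf : ℕ) rf.isLt]
    have : (⟨(rf:ℕ), rf.isLt⟩ : Fin n) = rf := Fin.ext rfl
    rw [this]; exact hrf1
  have P5b : ∀ i, i < n → F i = 1 → i = (rf : ℕ) := by
    intro i hin hFi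
    rw [hFval i hin] at hFi
    have := hrfu ⟨i, hin⟩ hFi
    exact congrArg Fin.val this
  obtain ⟨hr3, hall⟩ := struct_from_facts F hn rf.isLt P1 P2 P3 P4 P5a P5b
  refine ⟨(rf : ℕ), rf.isLt, hr3, ?_⟩
  funext v
  have h := hall (v : ℕ) v.isLt
  rw [hFval (v : ℕ) v.isLt] at h
  have hv : (⟨(v:ℕ), v.isLt⟩ : Fin n) = v := Fin.ext rfl
  rw [hv] at h
  exact h

lemma gammaR_path (n : ℕ) (hn : n % 3 = 1) :
    gammaR (SimpleGraph.pathGraph n) = 2 * (n / 3) + 1 := by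
  have h0n : 0 < n := by omega
  have hmem : 2 * (n / 3) + 1 ∈
      {w | ∃ f, IsRDF (SimpleGraph.pathGraph n) f ∧ ∑ v, f v = w} :=
    ⟨pathOneFun n 0, pathOneFun_isRDF n 0 h0n rfl hn, pathOneFun_sum n 0 h0n rfl hn⟩
  apply le_antisymm
  · exact Nat.sInf_le hmem
  · apply le_csInf ⟨_, hmem⟩
    rintro w ⟨f, hf, rfl⟩
    have := rdf_lower hf
    omega

lemma range_filter_mod3_card (n : ℕ) :
    ((Finset.range n).filter (fun r => r % 3 = 0)).card = (n + 2) / 3 := by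
  induction n with
  | zero => simp
  | succ n ih =>
    rw [Finset.range_add_one, Finset.filter_insert]
    by_cases h : n % 3 = 0
    · rw [if_pos h, Finset.card_insert_of_notMem (by simp)]
      omega
    · rw [if_neg h]
      omega

theorem path_minRDF_mod_one (n : ℕ) (hn : n % 3 = 1) :
    (∀ f, IsMinRDF (SimpleGraph.pathGraph n) f ↔
        ∃ r, r < n ∧ r % 3 = 0 ∧ f = pathOneFun n r) ∧
    {f | IsMinRDF (SimpleGraph.pathGraph n) f}.ncard = (n + 2) / 3 := by
  have hγ := gammaR_path n hn
  have hiff : ∀ f, IsMinRDF (SimpleGraph.pathGraph n) f ↔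
      ∃ r, r < n ∧ r % 3 = 0 ∧ f = pathOneFun n r := by
    intro f
    constructor
    · rintro ⟨hf, hw⟩
      rw [hγ] at hw
      exact equality_struct hn hf (by omega)
    · rintro ⟨r, hr, hr3, rfl⟩
      exact ⟨pathOneFun_isRDF n r hr hr3 hn, by rw [pathOneFun_sum n r hr hr3 hn, hγ]⟩
  refine ⟨hiff, ?_⟩
  have hset : {f | IsMinRDF (SimpleGraph.pathGraph n) f}
      = (fun r => pathOneFun n r) '' {r | r < n ∧ r % 3 = 0} := by
    ext f
    rw [Set.mem_setOf_eq, hiff f]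
    constructor
    · rintro ⟨r, hr, hr3, rfl⟩
      exact ⟨r, ⟨hr, hr3⟩, rfl⟩
    · rintro ⟨r, ⟨hr, hr3⟩, rfl⟩
      exact ⟨r, hr, hr3, rfl⟩
  rw [hset]
  have hinj : Set.InjOn (fun r => pathOneFun n r) {r | r < n ∧ r % 3 = 0} := by
    rintro r1 ⟨hr1, _⟩ r2 ⟨hr2, _⟩ he
    have h := congrFun he (⟨r1, hr1⟩ : Fin n)
    unfold pathOneFun at h
    simp only [Fin.val_mk] at h
    rw [if_pos trivial] at h
    by_contra hne
    rw [if_neg (fun hh => hne hh)] at h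
    split_ifs at h <;> omega
  rw [Set.ncard_image_of_injOn hinj]
  have : {r | r < n ∧ r % 3 = 0}
      = (((Finset.range n).filter (fun r => r % 3 = 0)) : Finset ℕ) := by
    ext r
    simp [and_comm]
  rw [this, Set.ncard_coe_finset, range_filter_mod3_card]
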